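/- Let X be a reflexive Banach space endowed with a partial order ⪯ whose order intervals are closed and convex, and let M be a nonempty closed subset of X. Then every bounded monotone increasing or monotone decreasing sequence (xₙ) in M is weakly convergent. -/

import Mathlib

open Filter Topology

/-- In a reflexive Banach space with a partial order whose order intervals are
closed and convex, every bounded monotone (increasing or decreasing) sequence
in a nonempty closed subset `M` is weakly convergent. -/
theorem bounded_monotone_weakly_convergent {X : Type*}
    [NormedAddCommGroup X] [NormedSpace ℝ X] [CompleteSpace X] [PartialOrder X]
    (h_reflexive : Function.Surjective (NormedSpace.inclusionInDoubleDual ℝ X))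
    (h_Ici_closed : ∀ a : X, IsClosed (Set.Ici a))
    (h_Iic_closed : ∀ a : X, IsClosed (Set.Iic a))
    (h_Ici_convex : ∀ a : X, Convex ℝ (Set.Ici a))
    (h_Iic_convex : ∀ a : X, Convex ℝ (Set.Iic a))
    (M : Set X) (hM_ne : M.Nonempty) (hM_closed : IsClosed M)
    (x : ℕ → X) (hxM : ∀ n, x n ∈ M)
    (h_bdd : Bornology.IsBounded (Set.range x))
    (h_mono : (∀ n, x n ≤ x (n + 1)) ∨ (∀ n, x (n + 1) ≤ x n)) :
    ∃ a : X, ∀ f : X →L[ℝ] ℝ, Tendsto (fun n => f (x n)) atTop (𝓝 (f a)) := by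
  classical
  obtain ⟨R, hR⟩ := isBounded_iff_forall_norm_le.mp h_bdd
  set J := NormedSpace.inclusionInDoubleDual ℝ X with hJ
  set y : ℕ → WeakDual ℝ (StrongDual ℝ X) :=
    fun n => StrongDual.toWeakDual (J (x n)) with hy
  set K : Set (WeakDual ℝ (StrongDual ℝ X)) :=
    WeakDual.toStrongDual ⁻¹' Metric.closedBall (0 : StrongDual ℝ (StrongDual ℝ X)) R with hKdef
  have hK : IsCompact K := WeakDual.isCompact_closedBall 0 R
  have hyK : ∀ n, y n ∈ K := by
    intro n
    have h1 : ‖J (x n)‖ ≤ ‖x n‖ := NormedSpace.double_dual_bound ℝ X (x n)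
    have h2 : ‖x n‖ ≤ R := hR _ ⟨n, rfl⟩
    simp only [hKdef, Set.mem_preimage, Metric.mem_closedBall, dist_zero_right]
    exact le_trans (le_of_eq (dist_zero_right (WeakDual.toStrongDual (y n)))) (h1.trans h2)
  -- any weak cluster point lies in every closed convex set that eventually contains the sequence
  have hcluster_mem : ∀ a : X, MapClusterPt (StrongDual.toWeakDual (J a)) atTop y →
      ∀ S : Set X, Convex ℝ S → IsClosed S → (∀ᶠ n in atTop, x n ∈ S) → a ∈ S := by
    intro a ha S hSc hScl hev
    by_contra haS
    obtain ⟨f, u, hfa, hfS⟩ := geometric_hahn_banach_point_closed hSc hScl haS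
    have hUopen : IsOpen {φ : WeakDual ℝ (StrongDual ℝ X) | φ f < u} :=
      (isOpen_Iio).preimage (WeakDual.eval_continuous f)
    have hUmem : {φ : WeakDual ℝ (StrongDual ℝ X) | φ f < u} ∈
        𝓝 (StrongDual.toWeakDual (J a)) :=
      hUopen.mem_nhds (by simpa [hJ, NormedSpace.dual_def] using hfa)
    have hfreq : ∃ᶠ n in atTop, (y n) f < u := mapClusterPt_iff_frequently.mp ha _ hUmem
    obtain ⟨n, hn1, hn2⟩ := (hfreq.and_eventually hev).exists
    have : u < f (x n) := hfS _ hn2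
    have : (y n) f = f (x n) := rfl
    linarith
  -- existence of a weak cluster point
  have hmap : Filter.map y atTop ≤ Filter.principal K := by
    rw [le_principal_iff, Filter.mem_map]
    exact Filter.Eventually.of_forall hyK
  obtain ⟨φ₀, hφ₀K, hφ₀⟩ := hK.exists_mapClusterPt hmap
  obtain ⟨a₀, ha₀⟩ := h_reflexive (WeakDual.toStrongDual φ₀)
  have hφ₀eq : φ₀ = StrongDual.toWeakDual (J a₀) := by
    rw [ha₀]; rfl
  rw [hφ₀eq] at hφ₀
  -- uniqueness of cluster points
  have hle : ∀ a b : X, MapClusterPt (StrongDual.toWeakDual (J a)) atTop y →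
      MapClusterPt (StrongDual.toWeakDual (J b)) atTop y → a ≤ b := by
    intro a b ha hb
    rcases h_mono with hinc | hdec
    · -- increasing: b is an upper bound of the sequence, hence a ∈ Iic b
      have hmono : Monotone x := monotone_nat_of_le_succ hinc
      have hub : ∀ n, x n ≤ b := fun n =>
        hcluster_mem b hb (Set.Ici (x n)) (h_Ici_convex _) (h_Ici_closed _)
          (eventually_atTop.mpr ⟨n, fun m hm => hmono hm⟩)
      exact hcluster_mem a ha (Set.Iic b) (h_Iic_convex b) (h_Iic_closed b)
        (Eventually.of_forall hub)
    · -- decreasing: a is a lower bound of the sequence, hence b ∈ Ici a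
      have hmono : Antitone x := antitone_nat_of_succ_le hdec
      have hlb : ∀ n, a ≤ x n := fun n =>
        hcluster_mem a ha (Set.Iic (x n)) (h_Iic_convex _) (h_Iic_closed _)
          (eventually_atTop.mpr ⟨n, fun m hm => hmono hm⟩)
      exact hcluster_mem b hb (Set.Ici a) (h_Ici_convex a) (h_Ici_closed a)
        (Eventually.of_forall hlb)
  have htend : Tendsto y atTop (𝓝 (StrongDual.toWeakDual (J a₀))) := by
    have hev : ∀ᶠ n in atTop, y n ∈ K := Eventually.of_forall hyK
    apply hK.tendsto_nhds_of_unique_mapClusterPt hev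
    intro φ hφK hφ
    obtain ⟨a, haeq⟩ := h_reflexive (WeakDual.toStrongDual φ)
    have hφeq : φ = StrongDual.toWeakDual (J a) := by rw [haeq]; rfl
    rw [hφeq] at hφ ⊢
    have : a = a₀ := le_antisymm (hle a a₀ hφ hφ₀) (hle a₀ a hφ₀ hφ)
    rw [this]
  refine ⟨a₀, fun f => ?_⟩
  have hcont := ((WeakDual.eval_continuous (𝕜 := ℝ) f).tendsto
    (StrongDual.toWeakDual (J a₀))).comp htend
  have h1 : (fun n => (y n) f) = fun n => f (x n) := rfl
  have h2 : (StrongDual.toWeakDual (J a₀)) f = f a₀ := rfl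
  rw [← h2]
  exact hcont
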